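/- R-reduction commutes locally with parallel η/SP-expansion: if M ⇒_E N and M →_R M', then there is a term P such that N →_R* P and M' ⇒_E P. -/

import Mathlib

/-- Untyped lambda terms with pairing and projections, de Bruijn representation
(so terms are automatically identified up to alpha-equivalence). -/
inductive Tm : Type
  | var : Nat → Tm
  | app : Tm → Tm → Tm
  | lam : Tm → Tm
  | pair : Tm → Tm → Tm
  | p1 : Tm → Tm
  | p2 : Tm → Tm

/-- Shift free de Bruijn indices ≥ d up by one. -/
def Tm.lift (d : Nat) : Tm → Tm
  | .var n => if n < d then .var n else .var (n + 1)
  | .app a b => .app (a.lift d) (b.lift d)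
  | .lam a => .lam (a.lift (d + 1))
  | .pair a b => .pair (a.lift d) (b.lift d)
  | .p1 a => .p1 (a.lift d)
  | .p2 a => .p2 (a.lift d)

/-- Capture-avoiding substitution of s for variable k. -/
def Tm.subst : Tm → Nat → Tm → Tm
  | .var n, k, s => if n = k then s else if n < k then .var n else .var (n - 1)
  | .app a b, k, s => .app (a.subst k s) (b.subst k s)
  | .lam a, k, s => .lam (a.subst (k + 1) (s.lift 0))
  | .pair a b, k, s => .pair (a.subst k s) (b.subst k s)
  | .p1 a, k, s => .p1 (a.subst k s)
  | .p2 a, k, s => .p2 (a.subst k s)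

/-- One-step R-reduction: compatible closure of (β), (π₁), (π₂), (δπ), (π₁λ), (π₂λ). -/
inductive StepR : Tm → Tm → Prop
  | beta {M N} : StepR (.app (.lam M) N) (M.subst 0 N)
  | pi1 {M N} : StepR (.p1 (.pair M N)) M
  | pi2 {M N} : StepR (.p2 (.pair M N)) N
  | dpi {M N P} : StepR (.app (.pair M N) P) (.pair (.app M P) (.app N P))
  | pi1lam {M} : StepR (.p1 (.lam M)) (.lam (.p1 M))
  | pi2lam {M} : StepR (.p2 (.lam M)) (.lam (.p2 M))
  | lam {M M'} : StepR M M' → StepR (.lam M) (.lam M')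
  | appL {M M' N} : StepR M M' → StepR (.app M N) (.app M' N)
  | appR {M N N'} : StepR N N' → StepR (.app M N) (.app M N')
  | pairL {M M' N} : StepR M M' → StepR (.pair M N) (.pair M' N)
  | pairR {M N N'} : StepR N N' → StepR (.pair M N) (.pair M N')
  | p1 {M M'} : StepR M M' → StepR (.p1 M) (.p1 M')
  | p2 {M M'} : StepR M M' → StepR (.p2 M) (.p2 M')

/-- Parallel η/SP-expansion. -/
inductive ParE : Tm → Tm → Prop
  | refl {M} : ParE M M
  | lam {M M'} : ParE M M' → ParE (.lam M) (.lam M')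
  | app {M M' N N'} : ParE M M' → ParE N N' → ParE (.app M N) (.app M' N')
  | pair {M M' N N'} : ParE M M' → ParE N N' → ParE (.pair M N) (.pair M' N')
  | p1 {M M'} : ParE M M' → ParE (.p1 M) (.p1 M')
  | p2 {M M'} : ParE M M' → ParE (.p2 M) (.p2 M')
  | eta {M M'} : ParE M M' → ParE M (.lam (.app (M'.lift 0) (.var 0)))
  | sp {M M'} : ParE M M' → ParE M (.pair (.p1 M') (.p2 M'))

theorem lift_lift (M : Tm) : ∀ i j, i ≤ j →
    Tm.lift i (Tm.lift j M) = Tm.lift (j+1) (Tm.lift i M) := by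
  induction M with
  | var n =>
    intro i j hij
    simp only [Tm.lift]
    split_ifs <;> simp only [Tm.lift] <;> split_ifs <;> first | rfl | omega | (congr 1; omega)
  | app a b iha ihb => intro i j h; simp only [Tm.lift, iha _ _ h, ihb _ _ h]
  | lam a iha => intro i j h; simp only [Tm.lift, iha _ _ (by omega : i+1 ≤ j+1)]
  | pair a b iha ihb => intro i j h; simp only [Tm.lift, iha _ _ h, ihb _ _ h]
  | p1 a iha => intro i j h; simp only [Tm.lift, iha _ _ h]
  | p2 a iha => intro i j h; simp only [Tm.lift, iha _ _ h]

theorem subst_lift (M : Tm) : ∀ k s, Tm.subst (Tm.lift k M) k s = M := by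
  induction M with
  | var n =>
    intro k s
    simp only [Tm.lift]
    split_ifs <;> simp only [Tm.subst] <;> split_ifs <;> first | rfl | omega | (congr 1; omega)
  | app a b iha ihb => intro k s; simp only [Tm.lift, Tm.subst, iha, ihb]
  | lam a iha => intro k s; simp only [Tm.lift, Tm.subst, iha]
  | pair a b iha ihb => intro k s; simp only [Tm.lift, Tm.subst, iha, ihb]
  | p1 a iha => intro k s; simp only [Tm.lift, Tm.subst, iha]
  | p2 a iha => intro k s; simp only [Tm.lift, Tm.subst, iha]

theorem lift_subst_var (M : Tm) : ∀ k, Tm.subst (Tm.lift (k+1) M) k (.var k) = M := by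
  induction M with
  | var n =>
    intro k
    simp only [Tm.lift]
    split_ifs <;> simp only [Tm.subst] <;> split_ifs <;> first | rfl | omega | (congr 1; omega)
  | app a b iha ihb => intro k; simp only [Tm.lift, Tm.subst, iha, ihb]
  | lam a iha =>
    intro k
    simp only [Tm.lift, Tm.subst, Nat.not_lt_zero, if_false, iha]
  | pair a b iha ihb => intro k; simp only [Tm.lift, Tm.subst, iha, ihb]
  | p1 a iha => intro k; simp only [Tm.lift, Tm.subst, iha]
  | p2 a iha => intro k; simp only [Tm.lift, Tm.subst, iha]

theorem subst_lift_comm (M : Tm) : ∀ k d s, k ≤ d →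
    Tm.lift d (Tm.subst M k s) = Tm.subst (Tm.lift (d+1) M) k (Tm.lift d s) := by
  induction M with
  | var n =>
    intro k d s h
    simp only [Tm.subst, Tm.lift]
    split_ifs <;> simp only [Tm.subst, Tm.lift] <;> split_ifs <;>
      first | rfl | omega | (congr 1; omega)
  | app a b iha ihb => intro k d s h; simp only [Tm.lift, Tm.subst, iha _ _ _ h, ihb _ _ _ h]
  | lam a iha =>
    intro k d s h
    simp only [Tm.lift, Tm.subst]
    rw [iha _ _ _ (by omega : k+1 ≤ d+1), lift_lift s 0 d (by omega)]
  | pair a b iha ihb => intro k d s h; simp only [Tm.lift, Tm.subst, iha _ _ _ h, ihb _ _ _ h]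
  | p1 a iha => intro k d s h; simp only [Tm.lift, Tm.subst, iha _ _ _ h]
  | p2 a iha => intro k d s h; simp only [Tm.lift, Tm.subst, iha _ _ _ h]

theorem lift_subst_comm (M : Tm) : ∀ k d s, d ≤ k →
    Tm.subst (Tm.lift d M) (k+1) (Tm.lift d s) = Tm.lift d (Tm.subst M k s) := by
  induction M with
  | var n =>
    intro k d s h
    simp only [Tm.subst, Tm.lift]
    split_ifs <;> simp only [Tm.subst, Tm.lift] <;> split_ifs <;>
      first | rfl | omega | (congr 1; omega)
  | app a b iha ihb => intro k d s h; simp only [Tm.lift, Tm.subst, iha _ _ _ h, ihb _ _ _ h]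
  | lam a iha =>
    intro k d s h
    simp only [Tm.lift, Tm.subst]
    rw [lift_lift s 0 d (by omega), iha _ _ _ (by omega : d+1 ≤ k+1)]
  | pair a b iha ihb => intro k d s h; simp only [Tm.lift, Tm.subst, iha _ _ _ h, ihb _ _ _ h]
  | p1 a iha => intro k d s h; simp only [Tm.lift, Tm.subst, iha _ _ _ h]
  | p2 a iha => intro k d s h; simp only [Tm.lift, Tm.subst, iha _ _ _ h]
theorem stepR_lift {M N : Tm} (h : StepR M N) : ∀ d, StepR (Tm.lift d M) (Tm.lift d N) := by
  induction h with
  | @beta M N =>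
    intro d
    have e : Tm.lift d (M.subst 0 N) = Tm.subst (Tm.lift (d+1) M) 0 (Tm.lift d N) :=
      subst_lift_comm M 0 d N (by omega)
    simp only [Tm.lift]
    rw [e]; exact StepR.beta
  | pi1 => intro d; exact StepR.pi1
  | pi2 => intro d; exact StepR.pi2
  | dpi => intro d; exact StepR.dpi
  | pi1lam => intro d; exact StepR.pi1lam
  | pi2lam => intro d; exact StepR.pi2lam
  | lam h ih => intro d; exact StepR.lam (ih (d+1))
  | appL h ih => intro d; exact StepR.appL (ih d)
  | appR h ih => intro d; exact StepR.appR (ih d)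
  | pairL h ih => intro d; exact StepR.pairL (ih d)
  | pairR h ih => intro d; exact StepR.pairR (ih d)
  | p1 h ih => intro d; exact StepR.p1 (ih d)
  | p2 h ih => intro d; exact StepR.p2 (ih d)

theorem parE_lift {M N : Tm} (h : ParE M N) : ∀ d, ParE (Tm.lift d M) (Tm.lift d N) := by
  induction h with
  | refl => intro d; exact ParE.refl
  | lam h ih => intro d; exact ParE.lam (ih (d+1))
  | app h1 h2 ih1 ih2 => intro d; exact ParE.app (ih1 d) (ih2 d)
  | pair h1 h2 ih1 ih2 => intro d; exact ParE.pair (ih1 d) (ih2 d)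
  | p1 h ih => intro d; exact ParE.p1 (ih d)
  | p2 h ih => intro d; exact ParE.p2 (ih d)
  | @eta M M' h ih =>
    intro d
    have e : Tm.lift (d+1) (Tm.lift 0 M') = Tm.lift 0 (Tm.lift d M') := by
      rw [lift_lift M' 0 d (by omega)]
    simp only [Tm.lift, Nat.zero_lt_succ, if_pos]
    rw [e]
    exact ParE.eta (ih d)
  | sp h ih => intro d; exact ParE.sp (ih d)

theorem parE_subst_right (M : Tm) : ∀ {s s'} (_ : ParE s s') (k), ParE (M.subst k s) (M.subst k s') := by
  induction M with
  | var n =>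
    intro s s' h k
    simp only [Tm.subst]
    split_ifs <;> first | exact h | exact ParE.refl
  | app a b iha ihb => intro s s' h k; exact ParE.app (iha h k) (ihb h k)
  | lam a iha => intro s s' h k; exact ParE.lam (iha (parE_lift h 0) (k+1))
  | pair a b iha ihb => intro s s' h k; exact ParE.pair (iha h k) (ihb h k)
  | p1 a iha => intro s s' h k; exact ParE.p1 (iha h k)
  | p2 a iha => intro s s' h k; exact ParE.p2 (iha h k)

theorem parE_subst {M M' : Tm} (h : ParE M M') :
    ∀ {s s'} (_ : ParE s s') (k), ParE (M.subst k s) (M'.subst k s') := by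
  induction h with
  | @refl M => intro s s' hs k; exact parE_subst_right M hs k
  | lam h ih => intro s s' hs k; exact ParE.lam (ih (parE_lift hs 0) (k+1))
  | app h1 h2 ih1 ih2 => intro s s' hs k; exact ParE.app (ih1 hs k) (ih2 hs k)
  | pair h1 h2 ih1 ih2 => intro s s' hs k; exact ParE.pair (ih1 hs k) (ih2 hs k)
  | p1 h ih => intro s s' hs k; exact ParE.p1 (ih hs k)
  | p2 h ih => intro s s' hs k; exact ParE.p2 (ih hs k)
  | @eta M M' h ih =>
    intro s s' hs k
    have e : Tm.subst (Tm.lift 0 M') (k+1) (Tm.lift 0 s') = Tm.lift 0 (M'.subst k s') :=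
      lift_subst_comm M' k 0 s' (by omega)
    simp only [Tm.subst]
    rw [if_neg (by omega : ¬ 0 = k+1), if_pos (by omega : 0 < k+1), e]
    exact ParE.eta (ih hs k)
  | sp h ih => intro s s' hs k; exact ParE.sp (ih hs k)

open Relation in
theorem rtg_lam {M N : Tm} (h : ReflTransGen StepR M N) :
    ReflTransGen StepR (.lam M) (.lam N) :=
  ReflTransGen.lift Tm.lam (fun _ _ => StepR.lam) _ _ h
open Relation in
theorem rtg_p1 {M N : Tm} (h : ReflTransGen StepR M N) :
    ReflTransGen StepR (.p1 M) (.p1 N) :=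
  ReflTransGen.lift Tm.p1 (fun _ _ => StepR.p1) _ _ h
open Relation in
theorem rtg_p2 {M N : Tm} (h : ReflTransGen StepR M N) :
    ReflTransGen StepR (.p2 M) (.p2 N) :=
  ReflTransGen.lift Tm.p2 (fun _ _ => StepR.p2) _ _ h
open Relation in
theorem rtg_appL {M N P : Tm} (h : ReflTransGen StepR M N) :
    ReflTransGen StepR (.app M P) (.app N P) :=
  ReflTransGen.lift (fun x => Tm.app x P) (fun _ _ => StepR.appL) _ _ h
open Relation in
theorem rtg_appR {M N P : Tm} (h : ReflTransGen StepR M N) :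
    ReflTransGen StepR (.app P M) (.app P N) :=
  ReflTransGen.lift (fun x => Tm.app P x) (fun _ _ => StepR.appR) _ _ h
open Relation in
theorem rtg_pairL {M N P : Tm} (h : ReflTransGen StepR M N) :
    ReflTransGen StepR (.pair M P) (.pair N P) :=
  ReflTransGen.lift (fun x => Tm.pair x P) (fun _ _ => StepR.pairL) _ _ h
open Relation in
theorem rtg_pairR {M N P : Tm} (h : ReflTransGen StepR M N) :
    ReflTransGen StepR (.pair P M) (.pair P N) :=
  ReflTransGen.lift (fun x => Tm.pair P x) (fun _ _ => StepR.pairR) _ _ h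
open Relation in
theorem rtg_lift {M N : Tm} (h : ReflTransGen StepR M N) (d : Nat) :
    ReflTransGen StepR (Tm.lift d M) (Tm.lift d N) :=
  ReflTransGen.lift (Tm.lift d) (fun _ _ hs => stepR_lift hs d) _ _ h
open Relation

theorem commK {X A : Tm} (h : ParE X A) : ∀ M₀, X = Tm.lam M₀ → ∀ B B' (_ : ParE B B'),
    (∃ Z, ReflTransGen StepR (Tm.app A B') Z ∧ ParE (M₀.subst 0 B) Z) ∧
    (∃ W, ReflTransGen StepR (Tm.app (Tm.p1 A) B') (Tm.p1 W) ∧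
          ReflTransGen StepR (Tm.app (Tm.p2 A) B') (Tm.p2 W) ∧
          ParE (M₀.subst 0 B) W) := by
  induction h with
  | @refl X =>
    intro M₀ hX B B' hB; subst hX
    refine ⟨⟨M₀.subst 0 B', ReflTransGen.single StepR.beta, parE_subst ParE.refl hB 0⟩,
      M₀.subst 0 B', ?_, ?_, parE_subst ParE.refl hB 0⟩
    · exact ReflTransGen.head (StepR.appL StepR.pi1lam) (ReflTransGen.single StepR.beta)
    · exact ReflTransGen.head (StepR.appL StepR.pi2lam) (ReflTransGen.single StepR.beta)
  | @lam M M' hMM' ih =>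
    intro M₀ hX B B' hB
    injection hX with e; subst e
    refine ⟨⟨M'.subst 0 B', ReflTransGen.single StepR.beta, parE_subst hMM' hB 0⟩,
      M'.subst 0 B', ?_, ?_, parE_subst hMM' hB 0⟩
    · exact ReflTransGen.head (StepR.appL StepR.pi1lam) (ReflTransGen.single StepR.beta)
    · exact ReflTransGen.head (StepR.appL StepR.pi2lam) (ReflTransGen.single StepR.beta)
  | app _ _ _ _ => intro M₀ hX; exact absurd hX (by simp)
  | pair _ _ _ _ => intro M₀ hX; exact absurd hX (by simp)
  | p1 _ _ => intro M₀ hX; exact absurd hX (by simp)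
  | p2 _ _ => intro M₀ hX; exact absurd hX (by simp)
  | @eta X A₀ h ih =>
    intro M₀ hX B B' hB
    obtain ⟨⟨Z, hZ1, hZ2⟩, _⟩ := ih M₀ hX B B' hB
    have esub : Tm.subst (Tm.app (Tm.lift 0 A₀) (Tm.var 0)) 0 B' = Tm.app A₀ B' := by
      simp [Tm.subst, subst_lift]
    have esub1 : Tm.subst (Tm.p1 (Tm.app (Tm.lift 0 A₀) (Tm.var 0))) 0 B'
        = Tm.p1 (Tm.app A₀ B') := by
      simp [Tm.subst, subst_lift]
    have esub2 : Tm.subst (Tm.p2 (Tm.app (Tm.lift 0 A₀) (Tm.var 0))) 0 B'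
        = Tm.p2 (Tm.app A₀ B') := by
      simp [Tm.subst, subst_lift]
    constructor
    · refine ⟨Z, ReflTransGen.head StepR.beta ?_, hZ2⟩
      rw [esub]; exact hZ1
    · refine ⟨Z, ?_, ?_, hZ2⟩
      · refine ReflTransGen.head (StepR.appL StepR.pi1lam) (ReflTransGen.head StepR.beta ?_)
        rw [esub1]; exact rtg_p1 hZ1
      · refine ReflTransGen.head (StepR.appL StepR.pi2lam) (ReflTransGen.head StepR.beta ?_)
        rw [esub2]; exact rtg_p2 hZ1
  | @sp X A₀ h ih =>
    intro M₀ hX B B' hB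
    obtain ⟨-, ⟨W, hW1, hW2, hW3⟩⟩ := ih M₀ hX B B' hB
    constructor
    · exact ⟨Tm.pair (Tm.p1 W) (Tm.p2 W),
        ReflTransGen.head StepR.dpi (ReflTransGen.trans (rtg_pairL hW1) (rtg_pairR hW2)),
        ParE.sp hW3⟩
    · exact ⟨W, ReflTransGen.head (StepR.appL StepR.pi1) hW1,
        ReflTransGen.head (StepR.appL StepR.pi2) hW2, hW3⟩
theorem commG {X A : Tm} (h : ParE X A) : ∀ M₁ M₂, X = Tm.pair M₁ M₂ →
    (∃ Z, ReflTransGen StepR (Tm.p1 A) Z ∧ ParE M₁ Z) ∧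
    (∃ Z, ReflTransGen StepR (Tm.p2 A) Z ∧ ParE M₂ Z) ∧
    (∃ V₁ V₂, ReflTransGen StepR (Tm.app (Tm.lift 0 A) (Tm.var 0)) (Tm.pair V₁ V₂) ∧
        ParE M₁ (Tm.lam V₁) ∧ ParE M₂ (Tm.lam V₂)) ∧
    (∀ P P', ParE P P' → ∃ Z, ReflTransGen StepR (Tm.app A P') Z ∧
        ParE (Tm.pair (Tm.app M₁ P) (Tm.app M₂ P)) Z) := by
  induction h with
  | @refl X =>
    intro M₁ M₂ hX; subst hX
    refine ⟨⟨M₁, ReflTransGen.single StepR.pi1, ParE.refl⟩,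
      ⟨M₂, ReflTransGen.single StepR.pi2, ParE.refl⟩,
      ⟨Tm.app (Tm.lift 0 M₁) (Tm.var 0), Tm.app (Tm.lift 0 M₂) (Tm.var 0), ?_,
        ParE.eta ParE.refl, ParE.eta ParE.refl⟩, ?_⟩
    · exact ReflTransGen.single StepR.dpi
    · intro P P' hP
      exact ⟨Tm.pair (Tm.app M₁ P') (Tm.app M₂ P'), ReflTransGen.single StepR.dpi,
        ParE.pair (ParE.app ParE.refl hP) (ParE.app ParE.refl hP)⟩
  | @pair M M' N N' h1 h2 ih1 ih2 =>
    intro M₁ M₂ hX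
    injection hX with e1 e2; subst e1; subst e2
    refine ⟨⟨M', ReflTransGen.single StepR.pi1, h1⟩,
      ⟨N', ReflTransGen.single StepR.pi2, h2⟩,
      ⟨Tm.app (Tm.lift 0 M') (Tm.var 0), Tm.app (Tm.lift 0 N') (Tm.var 0), ?_,
        ParE.eta h1, ParE.eta h2⟩, ?_⟩
    · exact ReflTransGen.single StepR.dpi
    · intro P P' hP
      exact ⟨Tm.pair (Tm.app M' P') (Tm.app N' P'), ReflTransGen.single StepR.dpi,
        ParE.pair (ParE.app h1 hP) (ParE.app h2 hP)⟩
  | lam _ _ => intro M₁ M₂ hX; exact absurd hX (by simp)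
  | app _ _ _ _ => intro M₁ M₂ hX; exact absurd hX (by simp)
  | p1 _ _ => intro M₁ M₂ hX; exact absurd hX (by simp)
  | p2 _ _ => intro M₁ M₂ hX; exact absurd hX (by simp)
  | @eta X A₀ h ih =>
    intro M₁ M₂ hX
    obtain ⟨-, -, ⟨V₁, V₂, hc1, hc2, hc3⟩, hd⟩ := ih M₁ M₂ hX
    refine ⟨⟨Tm.lam V₁, ?_, hc2⟩, ⟨Tm.lam V₂, ?_, hc3⟩, ⟨V₁, V₂, ?_, hc2, hc3⟩, ?_⟩
    · exact ReflTransGen.head StepR.pi1lam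
        (ReflTransGen.trans (rtg_lam (rtg_p1 hc1))
          (ReflTransGen.single (StepR.lam StepR.pi1)))
    · exact ReflTransGen.head StepR.pi2lam
        (ReflTransGen.trans (rtg_lam (rtg_p2 hc1))
          (ReflTransGen.single (StepR.lam StepR.pi2)))
    · -- app (lift 0 A) (var 0) ->beta app (lift 0 A₀) (var 0)
      have e : Tm.subst (Tm.app (Tm.lift (0+1) (Tm.lift 0 A₀)) (Tm.var 0)) 0 (Tm.var 0)
          = Tm.app (Tm.lift 0 A₀) (Tm.var 0) := by
        have := lift_subst_var (Tm.lift 0 A₀) 0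
        simp only [Tm.subst, this]
        simp
      simp only [Tm.lift]
      rw [if_pos (by omega : (0:Nat) < 0+1)]
      refine ReflTransGen.head StepR.beta ?_
      rw [e]; exact hc1
    · intro P P' hP
      obtain ⟨Z, hZ1, hZ2⟩ := hd P P' hP
      refine ⟨Z, ReflTransGen.head StepR.beta ?_, hZ2⟩
      have e : Tm.subst (Tm.app (Tm.lift 0 A₀) (Tm.var 0)) 0 P' = Tm.app A₀ P' := by
        simp [Tm.subst, subst_lift]
      rw [e]; exact hZ1
  | @sp X A₀ h ih =>
    intro M₁ M₂ hX
    obtain ⟨⟨Z₁, ha1, ha2⟩, ⟨Z₂, hb1, hb2⟩, -, -⟩ := ih M₁ M₂ hX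
    refine ⟨⟨Z₁, ReflTransGen.head StepR.pi1 ha1, ha2⟩,
      ⟨Z₂, ReflTransGen.head StepR.pi2 hb1, hb2⟩,
      ⟨Tm.app (Tm.lift 0 Z₁) (Tm.var 0), Tm.app (Tm.lift 0 Z₂) (Tm.var 0), ?_,
        ParE.eta ha2, ParE.eta hb2⟩, ?_⟩
    · refine ReflTransGen.head StepR.dpi ?_
      exact ReflTransGen.trans
        (rtg_pairL (rtg_appL (rtg_lift ha1 0)))
        (rtg_pairR (rtg_appL (rtg_lift hb1 0)))
    · intro P P' hP
      refine ⟨Tm.pair (Tm.app Z₁ P') (Tm.app Z₂ P'), ?_,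
        ParE.pair (ParE.app ha2 hP) (ParE.app hb2 hP)⟩
      exact ReflTransGen.head StepR.dpi
        (ReflTransGen.trans (rtg_pairL (rtg_appL ha1)) (rtg_pairR (rtg_appL hb1)))
theorem commL {X A : Tm} (h : ParE X A) : ∀ M₀, X = Tm.lam M₀ →
    (∃ Z, ReflTransGen StepR (Tm.p1 A) Z ∧ ParE (Tm.lam (Tm.p1 M₀)) Z) ∧
    (∃ Z, ReflTransGen StepR (Tm.p2 A) Z ∧ ParE (Tm.lam (Tm.p2 M₀)) Z) ∧
    (∃ V, ReflTransGen StepR (Tm.app (Tm.lift 0 A) (Tm.var 0)) V ∧ ParE M₀ V) := by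
  induction h with
  | @refl X =>
    intro M₀ hX; subst hX
    refine ⟨⟨Tm.lam (Tm.p1 M₀), ReflTransGen.single StepR.pi1lam, ParE.refl⟩,
      ⟨Tm.lam (Tm.p2 M₀), ReflTransGen.single StepR.pi2lam, ParE.refl⟩,
      ⟨M₀, ?_, ParE.refl⟩⟩
    have e := lift_subst_var M₀ 0
    simp only [Tm.lift]
    conv_rhs => rw [← e]
    exact ReflTransGen.single StepR.beta
  | @lam M M' hMM' ih =>
    intro M₀ hX
    injection hX with e1; subst e1
    refine ⟨⟨Tm.lam (Tm.p1 M'), ReflTransGen.single StepR.pi1lam, ParE.lam (ParE.p1 hMM')⟩,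
      ⟨Tm.lam (Tm.p2 M'), ReflTransGen.single StepR.pi2lam, ParE.lam (ParE.p2 hMM')⟩,
      ⟨M', ?_, hMM'⟩⟩
    have e := lift_subst_var M' 0
    simp only [Tm.lift]
    conv_rhs => rw [← e]
    exact ReflTransGen.single StepR.beta
  | app _ _ _ _ => intro M₀ hX; exact absurd hX (by simp)
  | pair _ _ _ _ => intro M₀ hX; exact absurd hX (by simp)
  | p1 _ _ => intro M₀ hX; exact absurd hX (by simp)
  | p2 _ _ => intro M₀ hX; exact absurd hX (by simp)
  | @eta X A₀ h ih =>
    intro M₀ hX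
    obtain ⟨-, -, ⟨V, hV1, hV2⟩⟩ := ih M₀ hX
    refine ⟨⟨Tm.lam (Tm.p1 V), ?_, ParE.lam (ParE.p1 hV2)⟩,
      ⟨Tm.lam (Tm.p2 V), ?_, ParE.lam (ParE.p2 hV2)⟩, ⟨V, ?_, hV2⟩⟩
    · exact ReflTransGen.head StepR.pi1lam (rtg_lam (rtg_p1 hV1))
    · exact ReflTransGen.head StepR.pi2lam (rtg_lam (rtg_p2 hV1))
    · have e : Tm.subst (Tm.app (Tm.lift (0+1) (Tm.lift 0 A₀)) (Tm.var 0)) 0 (Tm.var 0)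
          = Tm.app (Tm.lift 0 A₀) (Tm.var 0) := by
        have := lift_subst_var (Tm.lift 0 A₀) 0
        simp only [Tm.subst, this]
        simp
      simp only [Tm.lift]
      rw [if_pos (by omega : (0:Nat) < 0+1)]
      refine ReflTransGen.head StepR.beta ?_
      rw [e]; exact hV1
  | @sp X A₀ h ih =>
    intro M₀ hX
    obtain ⟨⟨Z₁, ha1, ha2⟩, ⟨Z₂, hb1, hb2⟩, -⟩ := ih M₀ hX
    refine ⟨⟨Z₁, ReflTransGen.head StepR.pi1 ha1, ha2⟩,
      ⟨Z₂, ReflTransGen.head StepR.pi2 hb1, hb2⟩, ?_⟩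
    -- app (pair (p1 (lift A₀)) (p2 (lift A₀))) (var 0)
    have hlift : ParE (Tm.lam (Tm.lift (0+1) M₀)) (Tm.lift 0 A₀) := by
      have := parE_lift h 0
      rw [hX] at this
      exact this
    obtain ⟨-, ⟨W, hW1, hW2, hW3⟩⟩ :=
      commK hlift (Tm.lift (0+1) M₀) rfl (Tm.var 0) (Tm.var 0) ParE.refl
    have hWpar : ParE M₀ W := by
      rw [lift_subst_var M₀ 0] at hW3; exact hW3
    refine ⟨Tm.pair (Tm.p1 W) (Tm.p2 W), ?_, ParE.sp hWpar⟩
    refine ReflTransGen.head StepR.dpi ?_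
    exact ReflTransGen.trans (rtg_pairL hW1) (rtg_pairR hW2)
/-- R-reduction commutes locally with parallel η/SP-expansion. -/
theorem parE_stepR_commute (M M' N : Tm) (hE : ParE M N) (hR : StepR M M') :
    ∃ P, Relation.ReflTransGen StepR N P ∧ ParE M' P := by
  revert M'
  induction hE with
  | refl => intro M' hR; exact ⟨M', ReflTransGen.single hR, ParE.refl⟩
  | @lam A A' h ih =>
    intro M' hR
    cases hR with
    | lam hs =>
      obtain ⟨P, hP1, hP2⟩ := ih _ hs
      exact ⟨Tm.lam P, rtg_lam hP1, ParE.lam hP2⟩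
  | @app A A' B B' h1 h2 ih1 ih2 =>
    intro M' hR
    cases hR with
    | @beta M₀ _ =>
      obtain ⟨⟨Z, hZ1, hZ2⟩, -⟩ := commK h1 M₀ rfl B B' h2
      exact ⟨Z, hZ1, hZ2⟩
    | @dpi M₁ M₂ _ =>
      obtain ⟨-, -, -, hd⟩ := commG h1 M₁ M₂ rfl
      obtain ⟨Z, hZ1, hZ2⟩ := hd B B' h2
      exact ⟨Z, hZ1, hZ2⟩
    | appL hs =>
      obtain ⟨P, hP1, hP2⟩ := ih1 _ hs
      exact ⟨Tm.app P B', rtg_appL hP1, ParE.app hP2 h2⟩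
    | appR hs =>
      obtain ⟨P, hP1, hP2⟩ := ih2 _ hs
      exact ⟨Tm.app A' P, rtg_appR hP1, ParE.app h1 hP2⟩
  | @pair A A' B B' h1 h2 ih1 ih2 =>
    intro M' hR
    cases hR with
    | pairL hs =>
      obtain ⟨P, hP1, hP2⟩ := ih1 _ hs
      exact ⟨Tm.pair P B', rtg_pairL hP1, ParE.pair hP2 h2⟩
    | pairR hs =>
      obtain ⟨P, hP1, hP2⟩ := ih2 _ hs
      exact ⟨Tm.pair A' P, rtg_pairR hP1, ParE.pair h1 hP2⟩
  | @p1 A A' h ih =>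
    intro M' hR
    cases hR with
    | pi1 =>
      rename_i M₂
      obtain ⟨⟨Z, hZ1, hZ2⟩, -, -, -⟩ := commG h M' M₂ rfl
      exact ⟨Z, hZ1, hZ2⟩
    | @pi1lam M₀ =>
      obtain ⟨⟨Z, hZ1, hZ2⟩, -, -⟩ := commL h M₀ rfl
      exact ⟨Z, hZ1, hZ2⟩
    | p1 hs =>
      obtain ⟨P, hP1, hP2⟩ := ih _ hs
      exact ⟨Tm.p1 P, rtg_p1 hP1, ParE.p1 hP2⟩
  | @p2 A A' h ih =>
    intro M' hR
    cases hR with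
    | pi2 =>
      rename_i M₁
      obtain ⟨-, ⟨Z, hZ1, hZ2⟩, -, -⟩ := commG h M₁ M' rfl
      exact ⟨Z, hZ1, hZ2⟩
    | @pi2lam M₀ =>
      obtain ⟨-, ⟨Z, hZ1, hZ2⟩, -⟩ := commL h M₀ rfl
      exact ⟨Z, hZ1, hZ2⟩
    | p2 hs =>
      obtain ⟨P, hP1, hP2⟩ := ih _ hs
      exact ⟨Tm.p2 P, rtg_p2 hP1, ParE.p2 hP2⟩
  | @eta A A₀ h ih =>
    intro M' hR
    obtain ⟨P, hP1, hP2⟩ := ih _ hR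
    exact ⟨Tm.lam (Tm.app (Tm.lift 0 P) (Tm.var 0)),
      rtg_lam (rtg_appL (rtg_lift hP1 0)), ParE.eta hP2⟩
  | @sp A A₀ h ih =>
    intro M' hR
    obtain ⟨P, hP1, hP2⟩ := ih _ hR
    exact ⟨Tm.pair (Tm.p1 P) (Tm.p2 P),
      ReflTransGen.trans (rtg_pairL (rtg_p1 hP1)) (rtg_pairR (rtg_p2 hP1)), ParE.sp hP2⟩
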